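/- The map L ↦ PAD(L), where PAD(L) = {uv | u ∈ L, v ∈ Σ^{2^{|u|}}}, is injective on languages over Σ. Consequently, there are uncountably many languages over a two-letter alphabet with topological entropy zero. -/

import Mathlib

open Filter Topology

/-- The `n`-th Myhill–Nerode approximation: `u ~ v` iff all witnesses of length at most `n`
agree. -/
def thetaN {α : Type*} (L : Set (List α)) (n : ℕ) (u v : List α) : Prop :=
  ∀ w : List α, w.length ≤ n → ((u ++ w) ∈ L ↔ (v ++ w) ∈ L)

/-- The index (number of classes) of `thetaN L n`. -/
noncomputable def indexN {α : Type*} (L : Set (List α)) (n : ℕ) : ℕ :=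
  Nat.card (Quot (thetaN L n))

/-- Topological entropy of a language, with values in `[0,∞]`. -/
noncomputable def entropy {α : Type*} (L : Set (List α)) : ENNReal :=
  Filter.limsup (fun n : ℕ => ENNReal.ofReal (Real.logb 2 (indexN L n) / n)) Filter.atTop

/-- The padded version of a language. -/
def PAD {α : Type*} (L : Set (List α)) : Set (List α) :=
  {w | ∃ u ∈ L, ∃ v : List α, v.length = 2 ^ u.length ∧ w = u ++ v}

open scoped Classical

/-- Sparse unary languages: words `a^(2^k)` for `k ∈ S`. -/
def La {α : Type*} (a : α) (S : Set ℕ) : Set (List α) :=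
  {w | ∃ k ∈ S, w = List.replicate (2 ^ k) a}

lemma mem_La {α : Type*} {a : α} {S : Set ℕ} {x : List α} :
    x ∈ La a S ↔ x = List.replicate x.length a ∧ ∃ k ∈ S, x.length = 2 ^ k := by
  constructor
  · rintro ⟨k, hk, rfl⟩
    simp only [List.length_replicate]
    exact ⟨trivial, k, hk, rfl⟩
  · rintro ⟨h1, k, hk, h2⟩
    exact ⟨k, hk, by rw [h1, h2]⟩

lemma window_unique {m n j1 j2 k1 k2 : ℕ} (hm : n < m) (hj1 : j1 ≤ n) (hj2 : j2 ≤ n)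
    (h1 : m + j1 = 2 ^ k1) (h2 : m + j2 = 2 ^ k2) : j1 = j2 := by
  rcases lt_trichotomy k1 k2 with hk | hk | hk
  · have h3 : 2 * (m + j1) ≤ m + j2 := by
      rw [h1, h2]
      calc 2 * 2 ^ k1 = 2 ^ (k1 + 1) := (pow_succ' 2 k1).symm
        _ ≤ 2 ^ k2 := Nat.pow_le_pow_right (by norm_num) hk
    omega
  · subst hk; omega
  · have h3 : 2 * (m + j2) ≤ m + j1 := by
      rw [h1, h2]
      calc 2 * 2 ^ k2 = 2 ^ (k2 + 1) := (pow_succ' 2 k2).symm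
        _ ≤ 2 ^ k1 := Nat.pow_le_pow_right (by norm_num) hk
    omega

/-- An encoding of the (at most one) witness length `j ≤ n` with `m + j` in the support. -/
noncomputable def enc (S : Set ℕ) (n m : ℕ) : Option (Fin (n + 1)) :=
  if h : ∃ j : Fin (n + 1), ∃ k ∈ S, m + (j : ℕ) = 2 ^ k then some h.choose else none

lemma enc_spec {S : Set ℕ} {n m : ℕ} (hm : n < m) (j : Fin (n + 1)) :
    (∃ k ∈ S, m + (j : ℕ) = 2 ^ k) ↔ enc S n m = some j := by
  unfold enc
  constructor
  · intro hj
    have h : ∃ j' : Fin (n + 1), ∃ k ∈ S, m + (j' : ℕ) = 2 ^ k := ⟨j, hj⟩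
    rw [dif_pos h]
    obtain ⟨k1, _, e1⟩ := h.choose_spec
    obtain ⟨k2, _, e2⟩ := hj
    have : ((h.choose : Fin (n + 1)) : ℕ) = (j : ℕ) :=
      window_unique hm (Nat.lt_succ_iff.mp h.choose.isLt) (Nat.lt_succ_iff.mp j.isLt) e1 e2
    rw [Fin.ext this]
  · intro hj
    by_cases h : ∃ j' : Fin (n + 1), ∃ k ∈ S, m + (j' : ℕ) = 2 ^ k
    · rw [dif_pos h] at hj
      obtain ⟨k, hk, e⟩ := h.choose_spec
      have : h.choose = j := by simpa using hj
      rw [← this]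
      exact ⟨k, hk, e⟩
    · rw [dif_neg h] at hj
      simp at hj

/-- A classifier whose value determines the `thetaN`-class. -/
noncomputable def lab {α : Type*} (a : α) (S : Set ℕ) (n : ℕ) (u : List α) :
    (Fin (n + 1) ⊕ Option (Fin (n + 1))) ⊕ Unit :=
  if u = List.replicate u.length a then
    if h : u.length ≤ n then Sum.inl (Sum.inl ⟨u.length, by omega⟩)
    else Sum.inl (Sum.inr (enc S n u.length))
  else Sum.inr ()

lemma append_mem_La {α : Type*} {a : α} {S : Set ℕ} {u w : List α}
    (hu : u = List.replicate u.length a) :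
    u ++ w ∈ La a S ↔
      (w = List.replicate w.length a ∧ ∃ k ∈ S, u.length + w.length = 2 ^ k) := by
  rw [mem_La, List.length_append]
  constructor
  · rintro ⟨h1, hk⟩
    refine ⟨?_, hk⟩
    have := congrArg (List.drop u.length) h1
    rwa [List.drop_left, List.drop_replicate, Nat.add_sub_cancel_left] at this
  · rintro ⟨h1, hk⟩
    refine ⟨?_, hk⟩
    rw [List.replicate_add]
    exact congrArg₂ (· ++ ·) hu h1

lemma not_append_mem_La {α : Type*} {a : α} {S : Set ℕ} {u w : List α}
    (hu : u ≠ List.replicate u.length a) : u ++ w ∉ La a S := by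
  intro hmem
  rw [mem_La] at hmem
  apply hu
  have := congrArg (List.take u.length) hmem.1
  rwa [List.take_left, List.take_replicate, List.length_append,
    min_eq_left (Nat.le_add_right _ _)] at this

lemma lab_eq_thetaN {α : Type*} {a : α} {S : Set ℕ} {n : ℕ} {u v : List α}
    (h : lab a S n u = lab a S n v) : thetaN (La a S) n u v := by
  intro w hw
  unfold lab at h
  by_cases hu : u = List.replicate u.length a <;>
    by_cases hv : v = List.replicate v.length a
  · rw [if_pos hu, if_pos hv] at h
    by_cases hun : u.length ≤ n <;> by_cases hvn : v.length ≤ n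
    · rw [dif_pos hun, dif_pos hvn] at h
      simp only [Sum.inl.injEq, Fin.mk.injEq] at h
      rw [hu, hv, h]
    · rw [dif_pos hun, dif_neg hvn] at h
      simp at h
    · rw [dif_neg hun, dif_pos hvn] at h
      simp at h
    · rw [dif_neg hun, dif_neg hvn] at h
      simp only [Sum.inl.injEq, Sum.inr.injEq] at h
      push_neg at hun hvn
      rw [append_mem_La hu, append_mem_La hv]
      have hj : (⟨w.length, by omega⟩ : Fin (n + 1)).val = w.length := rfl
      constructor <;> rintro ⟨h1, h2⟩ <;> refine ⟨h1, ?_⟩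
      · have := (enc_spec hun (⟨w.length, by omega⟩ : Fin (n + 1))).mp (by simpa [hj] using h2)
        rw [h] at this
        simpa [hj] using (enc_spec hvn _).mpr this
      · have := (enc_spec hvn (⟨w.length, by omega⟩ : Fin (n + 1))).mp (by simpa [hj] using h2)
        rw [← h] at this
        simpa [hj] using (enc_spec hun _).mpr this
  · rw [if_pos hu, if_neg hv] at h
    split_ifs at h
  · rw [if_neg hu, if_pos hv] at h
    split_ifs at h
  · simp [not_append_mem_La hu, not_append_mem_La hv]

lemma quot_inj {α : Type*} (a : α) (S : Set ℕ) (n : ℕ) :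
    Function.Injective (fun q : Quot (thetaN (La a S) n) => lab a S n q.out) := by
  intro q1 q2 hq
  rw [← Quot.out_eq q1, ← Quot.out_eq q2]
  exact Quot.sound (lab_eq_thetaN hq)

lemma indexN_La_le {α : Type*} (a : α) (S : Set ℕ) (n : ℕ) :
    indexN (La a S) n ≤ 2 * n + 4 := by
  have := Nat.card_le_card_of_injective _ (quot_inj a S n)
  calc indexN (La a S) n ≤
      Nat.card ((Fin (n + 1) ⊕ Option (Fin (n + 1))) ⊕ Unit) := this
    _ = 2 * n + 4 := by
        simp [Nat.card_sum, Nat.card_eq_fintype_card]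
        omega

lemma indexN_La_pos {α : Type*} (a : α) (S : Set ℕ) (n : ℕ) :
    1 ≤ indexN (La a S) n := by
  have : Finite (Quot (thetaN (La a S) n)) := Finite.of_injective _ (quot_inj a S n)
  have : Nonempty (Quot (thetaN (La a S) n)) := ⟨Quot.mk _ []⟩
  exact Nat.card_pos

lemma tendsto_log_lin_div : Tendsto (fun n : ℕ => Real.log (2 * n + 4) / n) atTop (𝓝 0) := by
  have h2n : Tendsto (fun n : ℕ => (2 * n + 4 : ℝ)) atTop atTop := by
    apply tendsto_atTop_mono (fun n => ?_) tendsto_natCast_atTop_atTop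
    have : (0 : ℝ) ≤ n := Nat.cast_nonneg n
    linarith
  have f1 : Tendsto (fun n : ℕ => Real.log (2 * n + 4) / (2 * n + 4)) atTop (𝓝 0) :=
    (Real.isLittleO_log_id_atTop.tendsto_div_nhds_zero).comp h2n
  have f2 : Tendsto (fun n : ℕ => (2 * n + 4 : ℝ) / n) atTop (𝓝 2) := by
    have : Tendsto (fun n : ℕ => 2 + 4 / (n : ℝ)) atTop (𝓝 (2 + 0)) :=
      tendsto_const_nhds.add (tendsto_const_div_atTop_nhds_zero_nat 4)
    rw [add_zero] at this
    apply this.congr'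
    filter_upwards [eventually_ge_atTop 1] with n hn
    have hn' : (n : ℝ) ≠ 0 := by positivity
    field_simp
  have := f1.mul f2
  rw [zero_mul] at this
  apply this.congr'
  filter_upwards [eventually_ge_atTop 1] with n hn
  have h4 : (2 * (n : ℝ) + 4) ≠ 0 := by positivity
  field_simp

lemma entropy_La {α : Type*} (a : α) (S : Set ℕ) : entropy (La a S) = 0 := by
  unfold entropy
  apply Tendsto.limsup_eq
  have upper : Tendsto (fun n : ℕ => ENNReal.ofReal (Real.logb 2 (2 * n + 4) / n))
      atTop (𝓝 0) := by
    have hr : Tendsto (fun n : ℕ => Real.logb 2 (2 * n + 4) / n) atTop (𝓝 0) := by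
      have := tendsto_log_lin_div.mul_const (Real.log 2)⁻¹
      rw [zero_mul] at this
      apply this.congr fun n => ?_
      rw [Real.logb]
      ring
    have := ENNReal.tendsto_ofReal hr
    simpa using this
  apply tendsto_of_tendsto_of_tendsto_of_le_of_le' tendsto_const_nhds upper
  · exact Eventually.of_forall fun n => zero_le
  · apply Eventually.of_forall fun n => ?_
    apply ENNReal.ofReal_le_ofReal
    rcases Nat.eq_zero_or_pos n with rfl | hn
    · simp
    have hpos : (0 : ℝ) < n := by exact_mod_cast hn
    gcongr
    · norm_num
    · exact_mod_cast indexN_La_pos a S n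
    · have h1 := indexN_La_le a S n
      have : ((indexN (La a S) n : ℝ)) ≤ ((2 * n + 4 : ℕ) : ℝ) := by exact_mod_cast h1
      simpa [Nat.cast_add, Nat.cast_mul] using this

lemma injective_La {α : Type*} (a : α) : Function.Injective (fun S : Set ℕ => La a S) := by
  intro S T h0
  have h : La a S = La a T := h0
  ext k
  constructor <;> intro hk
  · have : List.replicate (2 ^ k) a ∈ La a T := h ▸ ⟨k, hk, rfl⟩
    obtain ⟨k', hk', e⟩ := this
    have : 2 ^ k = 2 ^ k' := by
      have := congrArg List.length e
      simpa using this
    have : k = k' := Nat.pow_right_injective (by norm_num) this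
    rwa [this]
  · have : List.replicate (2 ^ k) a ∈ La a S := h ▸ ⟨k, hk, rfl⟩
    obtain ⟨k', hk', e⟩ := this
    have : 2 ^ k = 2 ^ k' := by
      have := congrArg List.length e
      simpa using this
    have : k = k' := Nat.pow_right_injective (by norm_num) this
    rwa [this]

lemma pad_mem_mono {α : Type*} [Nonempty α] {L1 L2 : Set (List α)}
    (h : PAD L1 = PAD L2) {u : List α} (hu : u ∈ L1) : u ∈ L2 := by
  obtain ⟨a⟩ := ‹Nonempty α›
  have hmem : u ++ List.replicate (2 ^ u.length) a ∈ PAD L1 :=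
    ⟨u, hu, List.replicate (2 ^ u.length) a, by simp⟩
  rw [h] at hmem
  obtain ⟨u', hu', v', hv', e⟩ := hmem
  have hlen : u.length + 2 ^ u.length = u'.length + 2 ^ u'.length := by
    have := congrArg List.length e
    simpa [hv'] using this
  have hmono : StrictMono (fun m : ℕ => m + 2 ^ m) := by
    apply strictMono_nat_of_lt_succ
    intro m
    have : 2 ^ m < 2 ^ (m + 1) := Nat.pow_lt_pow_right (by norm_num) (Nat.lt_succ_self m)
    omega
  have hul : u.length = u'.length := hmono.injective hlen
  have : u = u' := (List.append_inj e hul).1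
  rwa [this]

lemma not_countable_setNat : ¬ Countable (Set ℕ) := by
  intro hc
  obtain ⟨f, hf⟩ := (countable_iff_exists_injective (Set ℕ)).mp hc
  exact Function.cantor_injective f hf

theorem pad_injective_and_uncountably_many_zero_entropy {α : Type*} [Fintype α]
    (h : 2 ≤ Fintype.card α) :
    Function.Injective (fun L : Set (List α) => PAD L) ∧
      ¬ Set.Countable {L : Set (List α) | entropy L = 0} := by
  have hne : Nonempty α := Fintype.card_pos_iff.mp (by omega)
  obtain ⟨a⟩ := hne
  have hne : Nonempty α := ⟨a⟩
  constructor
  · intro L1 L2 hL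
    have hL : PAD L1 = PAD L2 := hL
    ext u
    exact ⟨fun hu => pad_mem_mono hL hu, fun hu => pad_mem_mono hL.symm hu⟩
  · intro hc
    have hsub : Set.range (fun S : Set ℕ => La a S) ⊆ {L : Set (List α) | entropy L = 0} := by
      rintro _ ⟨S, rfl⟩
      exact entropy_La a S
    have hr : (Set.range (fun S : Set ℕ => La a S)).Countable := hc.mono hsub
    have : Countable (Set ℕ) := by
      have := hr.to_subtype
      have hg : Function.Injective
          (fun S : Set ℕ => (⟨La a S, ⟨S, rfl⟩⟩ : Set.range (fun S : Set ℕ => La a S))) := by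
        intro S T hST
        exact injective_La a (congrArg Subtype.val hST)
      exact hg.countable
    exact not_countable_setNat this
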